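/- Let S be a kernel operator with nonnegative kernel s on a σ-finite measure space (X, μ), mapping nonnegative measurable functions to nonnegative measurable functions. Let C = { f : f > 0 a.e. and Sf ≤ f a.e. }. If f, g ∈ C and 0 < α < 1, then for any lattice seminorm ‖·‖ on the ideal generated, ‖S(f^α g^(1−α))‖ ≤ ‖f^α g^(1−α)‖ ≤ ‖f‖^α ‖g‖^(1−α). -/

import Mathlib

open MeasureTheory

/-- Young's inequality for `ℝ≥0∞`: geometric mean is bounded by the weighted arithmetic mean. -/
lemma ennreal_young {α : ℝ} (hα : 0 < α) (hα1 : α < 1) (a b : ENNReal) :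
    a ^ α * b ^ (1 - α) ≤ ENNReal.ofReal α * a + ENNReal.ofReal (1 - α) * b := by
  have hα' : (0:ℝ) ≤ α := hα.le
  have h1α : (0:ℝ) ≤ 1 - α := by linarith
  rcases eq_or_ne a ⊤ with ha | ha
  · refine le_trans ?_ le_self_add
    rw [ha, ENNReal.mul_top (ENNReal.ofReal_pos.2 hα).ne']
    exact le_top
  rcases eq_or_ne b ⊤ with hb | hb
  · refine le_trans ?_ le_add_self
    rw [hb, ENNReal.mul_top (ENNReal.ofReal_pos.2 (by linarith : (0:ℝ) < 1 - α)).ne']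
    exact le_top
  · -- both finite
    lift a to NNReal using ha
    lift b to NNReal using hb
    rw [← ENNReal.coe_rpow_of_nonneg a hα', ← ENNReal.coe_rpow_of_nonneg b h1α,
      ENNReal.ofReal, ENNReal.ofReal, ← ENNReal.coe_mul, ← ENNReal.coe_mul, ← ENNReal.coe_mul,
      ← ENNReal.coe_add, ENNReal.coe_le_coe]
    have := NNReal.geom_mean_le_arith_mean2_weighted (α.toNNReal) ((1-α).toNNReal) a b ?_
    · convert this using 3 <;> simp [Real.coe_toNNReal _ hα', Real.coe_toNNReal _ h1α]
    · have : ((α.toNNReal + (1-α).toNNReal : NNReal) : ℝ) = 1 := by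
        simp [Real.coe_toNNReal _ hα', Real.coe_toNNReal _ h1α]
      exact_mod_cast this

/-- Pointwise: `s * (a^α * b^(1-α)) ≤ (s*a)^α * (s*b)^(1-α)` in `ℝ≥0∞`. -/
lemma ennreal_kernel_ptwise {α : ℝ} (hα : 0 < α) (hα1 : α < 1) (s a b : ENNReal) :
    s * (a ^ α * b ^ (1 - α)) ≤ (s * a) ^ α * (s * b) ^ (1 - α) := by
  have hα' : (0:ℝ) ≤ α := hα.le
  have h1α : (0:ℝ) ≤ 1 - α := by linarith
  rw [ENNReal.mul_rpow_of_nonneg _ _ hα', ENNReal.mul_rpow_of_nonneg _ _ h1α]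
  apply le_of_eq
  calc s * (a ^ α * b ^ (1 - α)) = (s ^ α * s ^ (1 - α)) * (a ^ α * b ^ (1 - α)) := by
        rw [← ENNReal.rpow_add_of_nonneg _ _ hα' h1α]
        norm_num
    _ = s ^ α * a ^ α * (s ^ (1 - α) * b ^ (1 - α)) := by ring

theorem kernel_geom_mean_seminorm {X : Type*} [MeasurableSpace X] (μ : Measure X)
    [SigmaFinite μ]
    (s : X → X → ENNReal) (hs : Measurable (Function.uncurry s))
    (N : (X → ENNReal) → ENNReal)
    (hN_add : ∀ u v, N (u + v) ≤ N u + N v)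
    (hN_smul : ∀ (c : ENNReal) u, N (c • u) = c * N u)
    (hN_mono : ∀ u v : X → ENNReal, (∀ᵐ x ∂μ, u x ≤ v x) → N u ≤ N v)
    (f g : X → ENNReal) (hf : Measurable f) (hg : Measurable g)
    (hf_pos : ∀ᵐ x ∂μ, 0 < f x) (hg_pos : ∀ᵐ x ∂μ, 0 < g x)
    (hSf : ∀ᵐ x ∂μ, ∫⁻ y, s x y * f y ∂μ ≤ f x)
    (hSg : ∀ᵐ x ∂μ, ∫⁻ y, s x y * g y ∂μ ≤ g x)
    (α : ℝ) (hα : 0 < α) (hα1 : α < 1) :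
    N (fun x => ∫⁻ y, s x y * (f y ^ α * g y ^ (1 - α)) ∂μ) ≤
      N (fun x => f x ^ α * g x ^ (1 - α)) ∧
    N (fun x => f x ^ α * g x ^ (1 - α)) ≤ N f ^ α * N g ^ (1 - α) := by
  have hα' : (0:ℝ) ≤ α := hα.le
  have h1α : (0:ℝ) ≤ 1 - α := by linarith
  have h1α' : (0:ℝ) < 1 - α := by linarith
  constructor
  · -- Part 1
    apply hN_mono
    filter_upwards [hSf, hSg] with x hSfx hSgx
    have hsx : Measurable (s x) := hs.comp measurable_prodMk_left
    have hmeas1 : AEMeasurable (fun y => (s x y * f y) ^ α) μ :=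
      ((ENNReal.continuous_rpow_const.measurable).comp (hsx.mul hf)).aemeasurable
    have hmeas2 : AEMeasurable (fun y => (s x y * g y) ^ (1 - α)) μ :=
      ((ENNReal.continuous_rpow_const.measurable).comp (hsx.mul hg)).aemeasurable
    have hpq : Real.HolderConjugate (1/α) (1/(1-α)) := by
      constructor
      · rw [one_div, one_div, inv_inv, inv_inv, inv_one]; ring
      · exact one_div_pos.2 hα
      · exact one_div_pos.2 h1α'
    calc ∫⁻ y, s x y * (f y ^ α * g y ^ (1 - α)) ∂μ
        ≤ ∫⁻ y, (s x y * f y) ^ α * (s x y * g y) ^ (1 - α) ∂μ :=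
          lintegral_mono fun y => ennreal_kernel_ptwise hα hα1 _ _ _
      _ ≤ (∫⁻ y, ((s x y * f y) ^ α) ^ (1/α) ∂μ) ^ (1/(1/α)) *
          (∫⁻ y, ((s x y * g y) ^ (1 - α)) ^ (1/(1-α)) ∂μ) ^ (1/(1/(1-α))) :=
          ENNReal.lintegral_mul_le_Lp_mul_Lq μ hpq hmeas1 hmeas2
      _ = (∫⁻ y, s x y * f y ∂μ) ^ α * (∫⁻ y, s x y * g y ∂μ) ^ (1 - α) := by
          simp_rw [← ENNReal.rpow_mul, mul_one_div_cancel (ne_of_gt hα),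
            mul_one_div_cancel (ne_of_gt h1α'), ENNReal.rpow_one, one_div_one_div]
      _ ≤ f x ^ α * g x ^ (1 - α) :=
          mul_le_mul' (ENNReal.rpow_le_rpow hSfx hα') (ENNReal.rpow_le_rpow hSgx h1α)
  · -- Part 2 : seminorm Hölder
    rcases eq_or_ne (N f) 0 with hNf | hNf
    · have : N (fun x => f x ^ α * g x ^ (1 - α)) = 0 := by
        refine le_antisymm ?_ zero_le
        have h1 : N ((⊤ : ENNReal) • f) = 0 := by rw [hN_smul, hNf, mul_zero]
        rw [← h1]
        apply hN_mono
        filter_upwards [hf_pos] with x hx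
        simp [ENNReal.top_mul (ne_of_gt hx)]
      rw [this]; exact zero_le
    rcases eq_or_ne (N g) 0 with hNg | hNg
    · have : N (fun x => f x ^ α * g x ^ (1 - α)) = 0 := by
        refine le_antisymm ?_ zero_le
        have h1 : N ((⊤ : ENNReal) • g) = 0 := by rw [hN_smul, hNg, mul_zero]
        rw [← h1]
        apply hN_mono
        filter_upwards [hg_pos] with x hx
        simp [ENNReal.top_mul (ne_of_gt hx)]
      rw [this]; exact zero_le
    rcases eq_or_ne (N f) ⊤ with hNf' | hNf'
    · rw [hNf', ENNReal.top_rpow_of_pos hα, ENNReal.top_mul]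
      · exact le_top
      · exact fun h => hNg (by simpa [ENNReal.rpow_eq_zero_iff, h1α'] using
          (ENNReal.rpow_eq_zero_iff.1 h).elim (fun h => h.1) (fun h => absurd h.2 (by linarith)))
    rcases eq_or_ne (N g) ⊤ with hNg' | hNg'
    · rw [hNg', ENNReal.top_rpow_of_pos h1α', ENNReal.mul_top]
      · exact le_top
      · exact fun h => hNf ((ENNReal.rpow_eq_zero_iff.1 h).elim (fun h => h.1)
          (fun h => absurd h.2 (by linarith)))
    -- main case: 0 < N f, N g < ⊤
    set A := N f with hA
    set B := N g with hB
    have hAinv : A * A⁻¹ = 1 := ENNReal.mul_inv_cancel hNf hNf'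
    have hBinv : B * B⁻¹ = 1 := ENNReal.mul_inv_cancel hNg hNg'
    have key : (fun x => f x ^ α * g x ^ (1 - α)) =
        (A ^ α * B ^ (1 - α)) • (fun x => (A⁻¹ * f x) ^ α * (B⁻¹ * g x) ^ (1 - α)) := by
      funext x
      simp only [Pi.smul_apply, smul_eq_mul]
      rw [ENNReal.mul_rpow_of_nonneg _ _ hα', ENNReal.mul_rpow_of_nonneg _ _ h1α]
      calc f x ^ α * g x ^ (1 - α)
          = (A ^ α * A⁻¹ ^ α) * f x ^ α * ((B ^ (1-α) * B⁻¹ ^ (1-α)) * g x ^ (1 - α)) := by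
            rw [← ENNReal.mul_rpow_of_nonneg _ _ hα', ← ENNReal.mul_rpow_of_nonneg _ _ h1α,
              hAinv, hBinv, ENNReal.one_rpow, ENNReal.one_rpow, one_mul, one_mul]
        _ = A ^ α * B ^ (1 - α) * (A⁻¹ ^ α * f x ^ α * (B⁻¹ ^ (1 - α) * g x ^ (1 - α))) := by
            ring
    rw [key, hN_smul]
    have hbound : N (fun x => (A⁻¹ * f x) ^ α * (B⁻¹ * g x) ^ (1 - α)) ≤ 1 := by
      have step1 : N (fun x => (A⁻¹ * f x) ^ α * (B⁻¹ * g x) ^ (1 - α)) ≤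
          N ((ENNReal.ofReal α • (A⁻¹ • f)) + (ENNReal.ofReal (1 - α) • (B⁻¹ • g))) := by
        apply hN_mono
        filter_upwards with x
        simpa [mul_assoc] using ennreal_young hα hα1 (A⁻¹ * f x) (B⁻¹ * g x)
      refine step1.trans ?_
      refine (hN_add _ _).trans ?_
      rw [hN_smul, hN_smul, hN_smul, hN_smul, ← hA, ← hB, mul_comm A⁻¹ A, mul_comm B⁻¹ B,
        hAinv, hBinv, mul_one, mul_one, ← ENNReal.ofReal_add hα' h1α]
      norm_num
    calc A ^ α * B ^ (1 - α) * N (fun x => (A⁻¹ * f x) ^ α * (B⁻¹ * g x) ^ (1 - α))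
        ≤ A ^ α * B ^ (1 - α) * 1 := mul_le_mul_right hbound _
      _ = A ^ α * B ^ (1 - α) := mul_one _
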